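/- arXiv:1906.04492 — 4 statements merged into one kernel-verified Lean document; each statement's English description precedes it below -/
import Mathlib

section
/- Let (G¹, G⁰, G²) be an isometric cover of an isometric subgraph G of Q_m = Q(X): G¹ and G² are isometric subgraphs of G whose union of vertex sets is V(G), whose union of edge sets is E(G), with nonempty intersection inducing G⁰. If G¹ and G² both shatter the same subset Y of X, then G⁰ also shatters Y. -/
open Finset

/-- The hypercube graph on subsets of `Fin m`. -/
def cubeGraph (m : ℕ) : SimpleGraph (Finset (Fin m)) where
  Adj A B := (symmDiff A B).card = 1
  symm := ⟨fun A B h => by show (symmDiff B A : Finset (Fin m)).card = 1; rwa [symmDiff_comm]⟩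
  loopless := ⟨fun A h => by simp only [symmDiff_self, bot_eq_empty, card_empty] at h; exact absurd h (by norm_num)⟩

/-- `V` is (the vertex set of) a partial cube isometrically embedded in `Q_m`:
the distance in the induced subgraph equals the Hamming distance. -/
def IsPC {m : ℕ} (V : Set (Finset (Fin m))) : Prop :=
  ∀ u v : V, ((cubeGraph m).induce V).dist u v = (symmDiff u.1 v.1).card

def Shatters {m : ℕ} (V : Set (Finset (Fin m))) (Y : Finset (Fin m)) : Prop :=
  ∀ Z ⊆ Y, ∃ B ∈ V, B ∩ Y = Z

def VCdimLE {m : ℕ} (V : Set (Finset (Fin m))) (d : ℕ) : Prop :=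
  ∀ Y : Finset (Fin m), Shatters V Y → Y.card ≤ d

inductive PCStep {m : ℕ} : Set (Finset (Fin m)) → Set (Finset (Fin m)) → Prop
  | contract (i : Fin m) (V : Set (Finset (Fin m))) :
      PCStep V ((fun B => B.erase i) '' V)
  | restrictPos (i : Fin m) (V : Set (Finset (Fin m))) :
      PCStep V {B ∈ V | i ∈ B}
  | restrictNeg (i : Fin m) (V : Set (Finset (Fin m))) :
      PCStep V {B ∈ V | i ∉ B}

/-- Partial-cube minor relation: a sequence of contractions and restrictions. -/
def PCMinor {m : ℕ} : Set (Finset (Fin m)) → Set (Finset (Fin m)) → Prop :=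
  Relation.ReflTransGen PCStep

/-- `W` is (the vertex set of) a `k`-dimensional subcube of `Q_m`. -/
def IsCubeFam {m : ℕ} (k : ℕ) (W : Set (Finset (Fin m))) : Prop :=
  ∃ (Y X : Finset (Fin m)), Disjoint Y X ∧ X.card = k ∧
    W = {B | ∃ Z ⊆ X, B = Y ∪ Z}

/-- `G` has the cube `Q_k` as a pc-minor. -/
def HasQMinor {m : ℕ} (V : Set (Finset (Fin m))) (k : ℕ) : Prop :=
  ∃ W, PCMinor V W ∧ IsCubeFam k W

def hdist {m : ℕ} (A B : Finset (Fin m)) : ℕ := (symmDiff A B).card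

def IsConvexIn {m : ℕ} (V S : Set (Finset (Fin m))) : Prop :=
  S ⊆ V ∧ ∀ u ∈ S, ∀ v ∈ S, ∀ x ∈ V, hdist u x + hdist x v = hdist u v → x ∈ S

def convexHullIn {m : ℕ} (V S : Set (Finset (Fin m))) : Set (Finset (Fin m)) :=
  ⋂₀ {T | S ⊆ T ∧ IsConvexIn V T}

def IsGatedIn {m : ℕ} (V S : Set (Finset (Fin m))) : Prop :=
  S ⊆ V ∧ ∀ x ∈ V, ∃ g ∈ S, ∀ y ∈ S, hdist x g + hdist g y = hdist x y

/-- The standardly embedded full subdivision `SK_n` in `Q_n`: singletons and pairs. -/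
def SKset (n : ℕ) : Set (Finset (Fin n)) := {B | B.card = 1 ∨ B.card = 2}

/-- A standardly embedded copy of `SK_n` in `Q_m` along the injection `ι`. -/
def skCopy {m : ℕ} (n : ℕ) (ι : Fin n → Fin m) : Set (Finset (Fin m)) :=
  (fun B => B.image ι) '' SKset n


section aux

lemma hdist_triangle' {m : ℕ} (A B C : Finset (Fin m)) :
    (symmDiff A C).card ≤ (symmDiff A B).card + (symmDiff B C).card := by
  calc (symmDiff A C).card ≤ (symmDiff A B ∪ symmDiff B C).card :=
        card_le_card (symmDiff_triangle A B C)
    _ ≤ _ := card_union_le _ _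

lemma hdist_le_walk_length' {m : ℕ} {V : Set (Finset (Fin m))} :
    ∀ {u v : V} (p : (SimpleGraph.induce V (cubeGraph m)).Walk u v),
      (symmDiff u.1 v.1).card ≤ p.length := by
  intro u v p
  induction p with
  | nil => simp
  | @cons a b c h q ih =>
    have hab : (symmDiff a.1 b.1).card = 1 := h
    calc (symmDiff a.1 c.1).card ≤ (symmDiff a.1 b.1).card + (symmDiff b.1 c.1).card :=
          hdist_triangle' _ _ _
      _ ≤ 1 + q.length := by rw [hab]; omega
      _ = (SimpleGraph.Walk.cons h q).length := by simp [SimpleGraph.Walk.length_cons]; omega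

end aux

theorem test (m : ℕ) (V V1 V2 : Set (Finset (Fin m)))
    (hV : ∀ u v : V, ((cubeGraph m).induce V).dist u v = (symmDiff u.1 v.1).card)
    (h1 : V1 ⊆ V) (h2 : V2 ⊆ V)
    (hedge : ∀ u ∈ V, ∀ v ∈ V, (cubeGraph m).Adj u v →
      (u ∈ V1 ∧ v ∈ V1) ∨ (u ∈ V2 ∧ v ∈ V2))
    (Y : Finset (Fin m)) :
    ∀ n (B1 B2 : Finset (Fin m)), B1 ∈ V1 → B2 ∈ V2 → B1 ∩ Y = B2 ∩ Y →
      (symmDiff B1 B2).card = n → ∃ B ∈ V1 ∩ V2, B ∩ Y = B1 ∩ Y := by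
  intro n
  induction n with
  | zero =>
    intro B1 B2 hB1 hB2 htr hd
    have : B1 = B2 := by
      have := card_eq_zero.mp hd
      have h := symmDiff_eq_bot.mp (by simpa using this)
      exact h
    exact ⟨B1, ⟨hB1, this ▸ hB2⟩, rfl⟩
  | succ n ih =>
    intro B1 B2 hB1 hB2 htr hd
    have hdist_eq : ((cubeGraph m).induce V).dist ⟨B1, h1 hB1⟩ ⟨B2, h2 hB2⟩ = n + 1 := by
      rw [hV ⟨B1, h1 hB1⟩ ⟨B2, h2 hB2⟩]; exact hd
    obtain ⟨p, hp⟩ := SimpleGraph.exists_walk_of_dist_ne_zero (by rw [hdist_eq]; omega)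
    rw [hdist_eq] at hp
    cases p with
    | nil => simp at hp
    | @cons _ w _ h q =>
      simp [SimpleGraph.Walk.length_cons] at hp
      have hadj : (cubeGraph m).Adj B1 w.1 := h
      rcases hedge B1 (h1 hB1) w.1 w.2 hadj with ⟨_, hw1⟩ | ⟨hB1', _⟩
      swap
      · exact ⟨B1, ⟨hB1, hB1'⟩, rfl⟩
      ·
        have hq : (symmDiff w.1 B2).card ≤ n := by
          have := hdist_le_walk_length' (V := V) q
          simpa [hp] using this
        have htri : (symmDiff B1 B2).card ≤ (symmDiff B1 w.1).card + (symmDiff w.1 B2).card :=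
          hdist_triangle' _ _ _
        have h1w : (symmDiff B1 w.1).card = 1 := hadj
        have hwB2 : (symmDiff w.1 B2).card = n := by omega
        -- trace of w equals trace of B1
        have htrw : w.1 ∩ Y = B1 ∩ Y := by
          obtain ⟨i, hi⟩ := card_eq_one.mp h1w
          by_cases hiY : i ∈ Y
          · exfalso
            -- i ∈ symmDiff B1 w, i ∈ Y, and B1∩Y = B2∩Y, so i ∉ symmDiff B1 B2
            have hiB : (i ∈ B1 ↔ i ∈ B2) := by
              constructor <;> intro hmem
              · have : i ∈ B2 ∩ Y := htr ▸ mem_inter.mpr ⟨hmem, hiY⟩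
                exact (mem_inter.mp this).1
              · have : i ∈ B1 ∩ Y := htr.symm ▸ mem_inter.mpr ⟨hmem, hiY⟩
                exact (mem_inter.mp this).1
            have hiS : i ∉ symmDiff B1 B2 := by
              rw [mem_symmDiff]; tauto
            have hiT : i ∈ symmDiff B1 w.1 := hi ▸ mem_singleton_self i
            rw [mem_symmDiff] at hiT
            -- insert i (symmDiff B1 B2) ⊆ symmDiff w.1 B2
            have hsub : insert i (symmDiff B1 B2) ⊆ symmDiff w.1 B2 := by
              intro k hk
              rw [mem_insert] at hk
              rcases hk with rfl | hk
              · rw [mem_symmDiff] at hiS ⊢; tauto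
              · have hkne : k ∉ symmDiff B1 w.1 := by
                  rw [hi, mem_singleton]; rintro rfl
                  exact hiS hk
                rw [mem_symmDiff] at hk hkne ⊢; tauto
            have : n + 2 ≤ (symmDiff w.1 B2).card := by
              have := card_le_card hsub
              rwa [card_insert_of_notMem hiS, hd] at this
            omega
          · -- i ∉ Y: traces agree
            ext j
            simp only [mem_inter]
            constructor <;> rintro ⟨hj, hjY⟩ <;> refine ⟨?_, hjY⟩
            · by_contra hjB
              have : j ∈ symmDiff B1 w.1 := mem_symmDiff.mpr (Or.inr ⟨hj, hjB⟩)
              rw [hi, mem_singleton] at this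
              exact hiY (this ▸ hjY)
            · by_contra hjw
              have : j ∈ symmDiff B1 w.1 := mem_symmDiff.mpr (Or.inl ⟨hj, hjw⟩)
              rw [hi, mem_singleton] at this
              exact hiY (this ▸ hjY)
        obtain ⟨B, hB, hBtr⟩ := ih w.1 B2 hw1 hB2 (htrw.trans htr) hwB2
        exact ⟨B, hB, hBtr.trans htrw⟩


/-- If both parts of an isometric cover of an isometric subgraph of `Q_m`
shatter `Y`, then so does their intersection. -/
theorem stmt3 (m : ℕ) (V V1 V2 : Set (Finset (Fin m))) (hV : IsPC V)
    (h1 : V1 ⊆ V) (h2 : V2 ⊆ V) (hi1 : IsPC V1) (hi2 : IsPC V2)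
    (hcov : V1 ∪ V2 = V)
    (hedge : ∀ u ∈ V, ∀ v ∈ V, (cubeGraph m).Adj u v →
      (u ∈ V1 ∧ v ∈ V1) ∨ (u ∈ V2 ∧ v ∈ V2))
    (hne : (V1 ∩ V2).Nonempty)
    (Y : Finset (Fin m)) (hs1 : Shatters V1 Y) (hs2 : Shatters V2 Y) :
    Shatters (V1 ∩ V2) Y := by
  intro Z hZ
  obtain ⟨B1, hB1, hB1Z⟩ := hs1 Z hZ
  obtain ⟨B2, hB2, hB2Z⟩ := hs2 Z hZ
  obtain ⟨B, hB, hBtr⟩ := test m V V1 V2 hV h1 h2 hedge Y _ B1 B2 hB1 hB2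
    (hB1Z.trans hB2Z.symm) rfl
  exact ⟨B, hB, hBtr.trans hB1Z⟩
end

section
/- For every n ≥ 3, the graph SK*_n obtained from the standardly embedded full subdivision SK_n in Q_n by adding the vertex corresponding to the empty set is an isometric subgraph of Q_n of VC-dimension 2. -/
open Finset

section Aux

variable {n : ℕ}

lemma memV_iff (B : Finset (Fin n)) :
    B ∈ insert (∅ : Finset (Fin n)) (SKset n) ↔ B.card ≤ 2 := by
  simp only [Set.mem_insert_iff, SKset, Set.mem_setOf_eq]
  constructor
  · rintro (rfl | h | h)
    · simp
    · simp [h]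
    · simp [h]
  · intro h
    have : B.card = 0 ∨ B.card = 1 ∨ B.card = 2 := by omega
    rcases this with h0 | h1 | h2
    · exact Or.inl (card_eq_zero.mp h0)
    · exact Or.inr (Or.inl h1)
    · exact Or.inr (Or.inr h2)

lemma symmDiff_erase_left {u v : Finset (Fin n)} {x : Fin n} (hx : x ∈ u) (hxv : x ∉ v) :
    symmDiff (u.erase x) v = (symmDiff u v).erase x := by
  ext a
  simp only [mem_symmDiff, mem_erase]
  by_cases hax : a = x
  · subst hax; simp [hx, hxv]
  · tauto

lemma symmDiff_insert_left {u v : Finset (Fin n)} {x : Fin n} (hx : x ∉ u) (hxv : x ∈ v) :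
    symmDiff (insert x u) v = (symmDiff u v).erase x := by
  ext a
  simp only [mem_symmDiff, mem_erase, mem_insert]
  by_cases hax : a = x
  · subst hax; simp [hx, hxv]
  · tauto

lemma symmDiff_self_erase {u : Finset (Fin n)} {x : Fin n} (hx : x ∈ u) :
    symmDiff u (u.erase x) = {x} := by
  ext a
  simp only [mem_symmDiff, mem_erase, mem_singleton]
  by_cases hax : a = x
  · subst hax; simp [hx]
  · tauto

lemma symmDiff_self_insert {u : Finset (Fin n)} {x : Fin n} (hx : x ∉ u) :
    symmDiff u (insert x u) = {x} := by
  ext a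
  simp only [mem_symmDiff, mem_erase, mem_singleton, mem_insert]
  by_cases hax : a = x
  · subst hax; simp [hx]
  · tauto

lemma step_lemma {u v : Finset (Fin n)} (hu : u.card ≤ 2) (hv : v.card ≤ 2) (hne : u ≠ v) :
    ∃ w : Finset (Fin n), w.card ≤ 2 ∧ (symmDiff u w).card = 1 ∧
      (symmDiff w v).card + 1 = (symmDiff u v).card := by
  rcases (u \ v).eq_empty_or_nonempty with he | ⟨x, hx⟩
  · have hsub : u ⊆ v := sdiff_eq_empty_iff_subset.mp he
    have hss : u ⊂ v := hsub.ssubset_of_ne hne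
    obtain ⟨x, hxv, hxu⟩ := exists_of_ssubset hss
    have hxs : x ∈ symmDiff u v := by simp [mem_symmDiff, hxv, hxu]
    refine ⟨insert x u, ?_, ?_, ?_⟩
    · rw [card_insert_of_notMem hxu]
      have := card_lt_card hss
      omega
    · rw [symmDiff_self_insert hxu, card_singleton]
    · rw [symmDiff_insert_left hxu hxv, card_erase_of_mem hxs]
      have : 0 < (symmDiff u v).card := card_pos.mpr ⟨x, hxs⟩
      omega
  · rw [mem_sdiff] at hx
    obtain ⟨hxu, hxv⟩ := hx
    have hxs : x ∈ symmDiff u v := by simp [mem_symmDiff, hxu, hxv]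
    refine ⟨u.erase x, ?_, ?_, ?_⟩
    · have := card_erase_le (a := x) (s := u)
      omega
    · rw [symmDiff_self_erase hxu, card_singleton]
    · rw [symmDiff_erase_left hxu hxv, card_erase_of_mem hxs]
      have : 0 < (symmDiff u v).card := card_pos.mpr ⟨x, hxs⟩
      omega

lemma exists_walk_aux (k : ℕ) :
    ∀ (u v : ↥(insert (∅ : Finset (Fin n)) (SKset n))),
      (symmDiff u.1 v.1).card = k →
      ∃ p : ((cubeGraph n).induce (insert (∅ : Finset (Fin n)) (SKset n))).Walk u v,
        p.length = k := by
  induction k with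
  | zero =>
    intro u v h
    have : u.1 = v.1 := by
      have := card_eq_zero.mp h
      exact symmDiff_eq_bot.mp (by rw [bot_eq_empty]; exact this)
    obtain rfl : u = v := Subtype.ext this
    exact ⟨SimpleGraph.Walk.nil, rfl⟩
  | succ k ih =>
    intro u v h
    have hne : u.1 ≠ v.1 := by
      intro he
      rw [he, symmDiff_self] at h
      simp at h
    obtain ⟨w, hw2, hw1, hwk⟩ :=
      step_lemma ((memV_iff u.1).mp u.2) ((memV_iff v.1).mp v.2) hne
    have hwV : w ∈ insert (∅ : Finset (Fin n)) (SKset n) := (memV_iff w).mpr hw2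
    have hadj : ((cubeGraph n).induce (insert (∅ : Finset (Fin n)) (SKset n))).Adj u ⟨w, hwV⟩ :=
      hw1
    obtain ⟨p, hp⟩ := ih ⟨w, hwV⟩ v (show (symmDiff w v.1).card = k by omega)
    exact ⟨SimpleGraph.Walk.cons hadj p, by simp [hp]⟩

lemma walk_length_ge {u v : ↥(insert (∅ : Finset (Fin n)) (SKset n))}
    (p : ((cubeGraph n).induce (insert (∅ : Finset (Fin n)) (SKset n))).Walk u v) :
    (symmDiff u.1 v.1).card ≤ p.length := by
  induction p with
  | nil => simp
  | @cons a b c h p ih =>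
    have h1 : (symmDiff a.1 b.1).card = 1 := h
    calc (symmDiff a.1 c.1).card
        ≤ (symmDiff a.1 b.1 ∪ symmDiff b.1 c.1).card :=
          card_le_card (symmDiff_triangle a.1 b.1 c.1)
      _ ≤ (symmDiff a.1 b.1).card + (symmDiff b.1 c.1).card := card_union_le _ _
      _ ≤ 1 + p.length := by rw [h1]; exact Nat.add_le_add_left ih _
      _ = (SimpleGraph.Walk.cons h p).length := by simp [Nat.add_comm]

end Aux

/-- For `n ≥ 3`, `SK*_n` (the standard `SK_n` together with `∅`) is an isometric
subgraph of `Q_n` of VC-dimension 2. -/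
theorem stmt7 (n : ℕ) (hn : 3 ≤ n) :
    IsPC (insert (∅ : Finset (Fin n)) (SKset n)) ∧
      VCdimLE (insert (∅ : Finset (Fin n)) (SKset n)) 2 ∧
      ∃ Y : Finset (Fin n), Y.card = 2 ∧
        Shatters (insert (∅ : Finset (Fin n)) (SKset n)) Y := by
  refine ⟨?_, ?_, ?_⟩
  · intro u v
    obtain ⟨p, hp⟩ := exists_walk_aux (symmDiff u.1 v.1).card u v rfl
    have hle : ((cubeGraph n).induce (insert (∅ : Finset (Fin n)) (SKset n))).dist u v ≤
        (symmDiff u.1 v.1).card := hp ▸ SimpleGraph.dist_le p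
    have hr : ((cubeGraph n).induce (insert (∅ : Finset (Fin n)) (SKset n))).Reachable u v :=
      p.reachable
    obtain ⟨q, hq⟩ := hr.exists_walk_length_eq_dist
    have hge : (symmDiff u.1 v.1).card ≤
        ((cubeGraph n).induce (insert (∅ : Finset (Fin n)) (SKset n))).dist u v :=
      hq ▸ walk_length_ge q
    omega
  · intro Y hY
    obtain ⟨B, hB, hBY⟩ := hY Y (Finset.Subset.refl Y)
    have hsub : Y ⊆ B := by
      intro a ha
      have : a ∈ B ∩ Y := by rw [hBY]; exact ha
      exact (mem_inter.mp this).1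
    calc Y.card ≤ B.card := card_le_card hsub
      _ ≤ 2 := (memV_iff B).mp hB
  · have h0 : (⟨0, by omega⟩ : Fin n) ≠ (⟨1, by omega⟩ : Fin n) := by simp
    refine ⟨{⟨0, by omega⟩, ⟨1, by omega⟩}, ?_, ?_⟩
    · rw [card_insert_of_notMem (by simp), card_singleton]
    · intro Z hZ
      refine ⟨Z, ?_, inter_eq_left.mpr hZ⟩
      rw [memV_iff]
      calc Z.card ≤ ({⟨0, by omega⟩, ⟨1, by omega⟩} : Finset (Fin n)).card := card_le_card hZ
        _ ≤ 2 := (card_insert_le _ _).trans (by simp)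
end

section
/- Let C be an isometric 6-cycle of a partial cube G of VC-dimension at most 2 (G ∈ F(Q_3)). Then the convex hull of C in G is either C itself or is isomorphic to Q_3⁻, the 3-cube with one vertex removed. -/
open Finset

open scoped symmDiff

variable {m : ℕ}

lemma sd_card_add (A B : Finset (Fin m)) :
    (A ∆ B).card + 2 * (A ∩ B).card = A.card + B.card := by
  rw [symmDiff_def, Finset.sup_eq_union, Finset.card_union_of_disjoint disjoint_sdiff_sdiff]
  have h1 := Finset.card_sdiff_add_card_inter A B
  have h2 := Finset.card_sdiff_add_card_inter B A
  rw [Finset.inter_comm] at h2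
  omega

lemma between_iff (u x v : Finset (Fin m)) :
    hdist u x + hdist x v = hdist u v ↔ u ∩ v ⊆ x ∧ x ⊆ u ∪ v := by
  have hkey : (u ∆ x) ∆ (x ∆ v) = u ∆ v := by
    ext i; simp only [Finset.mem_symmDiff]; tauto
  have hc1 := sd_card_add (u ∆ x) (x ∆ v)
  rw [hkey] at hc1
  have hiff : (u ∆ x) ∩ (x ∆ v) = ∅ ↔ u ∩ v ⊆ x ∧ x ⊆ u ∪ v := by
    rw [Finset.eq_empty_iff_forall_notMem]
    constructor
    · intro h
      constructor
      · intro i hi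
        by_contra hix
        simp only [Finset.mem_inter] at hi
        exact h i (by simp only [Finset.mem_inter, Finset.mem_symmDiff]; tauto)
      · intro i hi
        by_contra hiu
        simp only [Finset.mem_union, not_or] at hiu
        exact h i (by simp only [Finset.mem_inter, Finset.mem_symmDiff]; tauto)
    · rintro ⟨h1, h2⟩ i hi
      simp only [Finset.mem_inter, Finset.mem_symmDiff] at hi
      have hh1 := @h1 i
      have hh2 := @h2 i
      simp only [Finset.mem_inter, Finset.mem_union] at hh1 hh2
      tauto
  show (u ∆ x).card + (x ∆ v).card = (u ∆ v).card ↔ _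
  rw [← hiff]
  constructor
  · intro h
    have : ((u ∆ x) ∩ (x ∆ v)).card = 0 := by omega
    exact Finset.card_eq_zero.mp this
  · intro h
    rw [h, Finset.card_empty] at hc1
    omega

lemma hdist_sd (A W W' : Finset (Fin m)) : hdist (A ∆ W) (A ∆ W') = (W ∆ W').card := by
  show ((A ∆ W) ∆ (A ∆ W')).card = _
  congr 1
  ext i; simp only [Finset.mem_symmDiff]; tauto

lemma sd_cancel (A B : Finset (Fin m)) : A ∆ (A ∆ B) = B := by
  ext i; simp only [Finset.mem_symmDiff]; tauto

lemma sd_inj (A : Finset (Fin m)) {W W' : Finset (Fin m)} (h : A ∆ W = A ∆ W') : W = W' := by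
  have := congrArg (fun X => A ∆ X) h
  simpa [sd_cancel] using this

lemma subset_triple {a b c : Fin m} {W : Finset (Fin m)} (h : W ⊆ {a, b, c}) :
    W = ∅ ∨ W = {a} ∨ W = {b} ∨ W = {c} ∨ W = {a, b} ∨ W = {a, c} ∨ W = {b, c} ∨ W = {a, b, c} := by
  have h' : ∀ i ∈ W, i = a ∨ i = b ∨ i = c := by
    intro i hi; have := h hi; simpa using this
  by_cases ha : a ∈ W <;> by_cases hb : b ∈ W <;> by_cases hc : c ∈ W
  · refine Or.inr (Or.inr (Or.inr (Or.inr (Or.inr (Or.inr (Or.inr ?_)))))) 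
    ext i; simp only [Finset.mem_insert, Finset.mem_singleton]
    constructor
    · intro hi; exact h' i hi
    · rintro (rfl | rfl | rfl) <;> assumption
  · refine Or.inr (Or.inr (Or.inr (Or.inr (Or.inl ?_))))
    ext i; simp only [Finset.mem_insert, Finset.mem_singleton]
    constructor
    · intro hi; rcases h' i hi with h1 | h1 | h1 <;> simp_all
    · rintro (rfl | rfl) <;> assumption
  · refine Or.inr (Or.inr (Or.inr (Or.inr (Or.inr ?_))))
    left
    ext i; simp only [Finset.mem_insert, Finset.mem_singleton]
    constructor
    · intro hi; rcases h' i hi with h1 | h1 | h1 <;> simp_all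
    · rintro (rfl | rfl) <;> assumption
  · refine Or.inr (Or.inl ?_)
    ext i; simp only [Finset.mem_singleton]
    constructor
    · intro hi; rcases h' i hi with h1 | h1 | h1 <;> simp_all
    · rintro rfl; assumption
  · refine Or.inr (Or.inr (Or.inr (Or.inr (Or.inr (Or.inr (Or.inl ?_))))))
    ext i; simp only [Finset.mem_insert, Finset.mem_singleton]
    constructor
    · intro hi; rcases h' i hi with h1 | h1 | h1 <;> simp_all
    · rintro (rfl | rfl) <;> assumption
  · refine Or.inr (Or.inr (Or.inl ?_))
    ext i; simp only [Finset.mem_singleton]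
    constructor
    · intro hi; rcases h' i hi with h1 | h1 | h1 <;> simp_all
    · rintro rfl; assumption
  · refine Or.inr (Or.inr (Or.inr (Or.inl ?_)))
    ext i; simp only [Finset.mem_singleton]
    constructor
    · intro hi; rcases h' i hi with h1 | h1 | h1 <;> simp_all
    · rintro rfl; assumption
  · left
    rw [Finset.eq_empty_iff_forall_notMem]
    intro i hi; rcases h' i hi with h1 | h1 | h1 <;> simp_all

def Fmap {m : ℕ} (v0 Wm : Finset (Fin m)) (e : Fin 3 → Fin m) (Z : Finset (Fin 3)) :
    Finset (Fin m) := v0 ∆ (Wm ∆ (Finset.univ \ Z).image e)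

lemma symmDiff_empty' {m : ℕ} (A : Finset (Fin m)) : A ∆ ∅ = A := by
  ext i; simp [Finset.mem_symmDiff]

lemma sd_cancel' {m : ℕ} (A B : Finset (Fin m)) : A ∆ (B ∆ A) = B := by
  ext i; simp only [Finset.mem_symmDiff]; tauto

lemma Fmap_sd {m : ℕ} (v0 Wm : Finset (Fin m)) {e : Fin 3 → Fin m}
    (he_inj : Function.Injective e) (Z Z' : Finset (Fin 3)) :
    (Fmap v0 Wm e Z) ∆ (Fmap v0 Wm e Z') = (Z ∆ Z').image e := by
  have h1 : (Fmap v0 Wm e Z) ∆ (Fmap v0 Wm e Z')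
      = ((Finset.univ \ Z).image e) ∆ ((Finset.univ \ Z').image e) := by
    unfold Fmap
    ext i; simp only [Finset.mem_symmDiff]; tauto
  rw [h1, ← Finset.image_symmDiff _ _ he_inj]
  congr 1
  ext i
  simp only [Finset.mem_symmDiff, Finset.mem_sdiff, Finset.mem_univ, true_and]
  tauto


lemma iso_lemma {a b c : Fin m} (hab : a ≠ b) (hac : a ≠ c) (hbc : b ≠ c)
    (v0 Wm : Finset (Fin m)) (hWm : Wm ⊆ {a, b, c})
    (S : Set (Finset (Fin m)))
    (hS : S = {B | ∃ W, W ⊆ ({a, b, c} : Finset (Fin m)) ∧ W ≠ Wm ∧ B = v0 ∆ W}) :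
    Nonempty (((cubeGraph m).induce S) ≃g
      ((cubeGraph 3).induce {B : Finset (Fin 3) | B ≠ Finset.univ})) := by

  obtain ⟨e, he0, he1, he2⟩ : ∃ e : Fin 3 → Fin m, e 0 = a ∧ e 1 = b ∧ e 2 = c :=
    ⟨![a, b, c], rfl, rfl, rfl⟩
  have he_inj : Function.Injective e := by
    intro i j hij
    fin_cases i <;> fin_cases j <;> simp_all <;>
      first
        | rfl
        | exact absurd hij hab | exact absurd hij hac | exact absurd hij hbc
        | exact absurd hij.symm hab | exact absurd hij.symm hac | exact absurd hij.symm hbc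
  have himg : ∀ s : Finset (Fin 3), s.image e ⊆ {a, b, c} := by
    intro s
    rw [Finset.image_subset_iff]
    intro i _
    fin_cases i <;> simp [he0, he1, he2]
  have hcover : ∀ j ∈ ({a, b, c} : Finset (Fin m)), ∃ i, e i = j := by
    intro j hj
    simp only [Finset.mem_insert, Finset.mem_singleton] at hj
    rcases hj with rfl | rfl | rfl
    exacts [⟨0, he0⟩, ⟨1, he1⟩, ⟨2, he2⟩]
  have hFd := Fmap_sd v0 Wm he_inj
  have hFcard : ∀ Z Z' : Finset (Fin 3),
      ((Fmap v0 Wm e Z) ∆ (Fmap v0 Wm e Z')).card = (Z ∆ Z').card := by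
    intro Z Z'
    rw [hFd, Finset.card_image_of_injective _ he_inj]
  have hFinj : Function.Injective (Fmap v0 Wm e) := by
    intro Z Z' h
    have h0 : ((Fmap v0 Wm e Z) ∆ (Fmap v0 Wm e Z')).card = 0 := by rw [h]; simp
    rw [hFcard] at h0
    have h0 := Finset.card_eq_zero.mp h0
    rwa [← Finset.bot_eq_empty, symmDiff_eq_bot] at h0
  have hmemS : ∀ Z : Finset (Fin 3), Z ≠ Finset.univ → Fmap v0 Wm e Z ∈ S := by
    intro Z hZ
    rw [hS]
    refine ⟨Wm ∆ (Finset.univ \ Z).image e, ?_, ?_, rfl⟩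
    · intro i hi
      rcases Finset.mem_symmDiff.mp hi with ⟨h1, _⟩ | ⟨h1, _⟩
      · exact hWm h1
      · exact himg _ h1
    · intro hEq
      have hne : ((Finset.univ \ Z).image e).Nonempty := by
        refine Finset.Nonempty.image ?_ _
        rw [Finset.sdiff_nonempty]
        intro hsub
        exact hZ (Finset.eq_univ_iff_forall.mpr fun i => hsub (Finset.mem_univ i))
      obtain ⟨j, hj⟩ := hne
      have hEq2 : Wm ∆ ((Finset.univ \ Z).image e) = Wm ∆ ∅ := by rw [hEq, symmDiff_empty']
      have h0 := sd_inj Wm hEq2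
      rw [h0] at hj
      exact absurd hj (Finset.notMem_empty j)
  have hsurj : ∀ B ∈ S, ∃ Z : Finset (Fin 3), Z ≠ Finset.univ ∧ Fmap v0 Wm e Z = B := by
    intro B hB
    rw [hS] at hB
    obtain ⟨W, hW, hne, rfl⟩ := hB
    refine ⟨Finset.univ.filter (fun i => e i ∉ W ∆ Wm), ?_, ?_⟩
    · have hWne : (W ∆ Wm).Nonempty := by
        rw [Finset.nonempty_iff_ne_empty, ← Finset.bot_eq_empty, Ne, symmDiff_eq_bot]
        exact hne
      obtain ⟨j, hj⟩ := hWne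
      have hjX : j ∈ ({a, b, c} : Finset (Fin m)) := by
        rcases Finset.mem_symmDiff.mp hj with ⟨h1, _⟩ | ⟨h1, _⟩
        · exact hW h1
        · exact hWm h1
      obtain ⟨i, rfl⟩ := hcover j hjX
      intro hEq
      have hi : i ∈ Finset.univ.filter (fun i => e i ∉ W ∆ Wm) := by
        rw [hEq]; exact Finset.mem_univ i
      rw [Finset.mem_filter] at hi
      exact hi.2 hj
    · have himg2 : (Finset.univ \ Finset.univ.filter (fun i => e i ∉ W ∆ Wm)).image e
          = W ∆ Wm := by
        ext j
        constructor
        · intro hj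
          obtain ⟨i, hi, rfl⟩ := Finset.mem_image.mp hj
          have h2 := (Finset.mem_sdiff.mp hi).2
          rw [Finset.mem_filter] at h2
          have h3 : ¬ (e i ∉ W ∆ Wm) := fun hn => h2 ⟨Finset.mem_univ i, hn⟩
          exact not_not.mp h3
        · intro hj
          have hjX : j ∈ ({a, b, c} : Finset (Fin m)) := by
            rcases Finset.mem_symmDiff.mp hj with ⟨h1, _⟩ | ⟨h1, _⟩
            · exact hW h1
            · exact hWm h1
          obtain ⟨i, rfl⟩ := hcover j hjX
          refine Finset.mem_image.mpr ⟨i, Finset.mem_sdiff.mpr ⟨Finset.mem_univ i, ?_⟩, rfl⟩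
          rw [Finset.mem_filter]
          rintro ⟨-, hn⟩
          exact hn hj
      unfold Fmap
      rw [himg2, sd_cancel']
  have hbij : Function.Bijective
      (fun Z : {B : Finset (Fin 3) | B ≠ Finset.univ} =>
        (⟨Fmap v0 Wm e Z.1, hmemS Z.1 Z.2⟩ : S)) := by
    constructor
    · intro x y hxy
      exact Subtype.ext (hFinj (congrArg Subtype.val hxy))
    · rintro ⟨B, hB⟩
      obtain ⟨Z, hZ, hFZ⟩ := hsurj B hB
      exact ⟨⟨Z, hZ⟩, Subtype.ext hFZ⟩
  have iso : ((cubeGraph 3).induce {B : Finset (Fin 3) | B ≠ Finset.univ})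
      ≃g ((cubeGraph m).induce S) := by
    refine ⟨Equiv.ofBijective _ hbij, ?_⟩
    intro x y
    show (cubeGraph m).Adj (Fmap v0 Wm e x.1) (Fmap v0 Wm e y.1) ↔ (cubeGraph 3).Adj x.1 y.1
    show ((Fmap v0 Wm e x.1) ∆ (Fmap v0 Wm e y.1)).card = 1 ↔ (x.1 ∆ y.1).card = 1
    rw [hFcard]
  exact ⟨iso.symm⟩

lemma cube_adj {m : ℕ} (A B : Finset (Fin m)) :
    (cubeGraph m).Adj A B ↔ (A ∆ B).card = 1 := Iff.rfl

lemma sd_eq_empty_iff {m : ℕ} {A B : Finset (Fin m)} : A ∆ B = ∅ ↔ A = B := by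
  rw [← Finset.bot_eq_empty, symmDiff_eq_bot]

lemma sd_sd {m : ℕ} (A W W' : Finset (Fin m)) : (A ∆ W) ∆ (A ∆ W') = W ∆ W' := by
  ext i; simp only [Finset.mem_symmDiff]; tauto

lemma sd_left_cancel {m : ℕ} (A W : Finset (Fin m)) : (A ∆ W) ∆ A = W := by
  ext i; simp only [Finset.mem_symmDiff]; tauto

-- cancellation helpers for singleton chains
lemma c2 {m : ℕ} (x y z : Fin m) :
    ({x} : Finset (Fin m)) ∆ ({x} ∆ {y} ∆ {z}) = {y} ∆ {z} := by
  ext i; simp only [Finset.mem_symmDiff]; tauto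

lemma c3 {m : ℕ} (x y z w : Fin m) :
    (({x} : Finset (Fin m)) ∆ {y}) ∆ ({x} ∆ {y} ∆ {z} ∆ {w}) = {z} ∆ {w} := by
  ext i
  by_cases h0 : i = x <;> by_cases h1 : i = y <;> by_cases h2 : i = z <;> by_cases h3 : i = w <;> simp_all [Finset.mem_symmDiff]

lemma c4 {m : ℕ} (x y z w v : Fin m) :
    (({x} : Finset (Fin m)) ∆ {y} ∆ {z}) ∆ ({x} ∆ {y} ∆ {z} ∆ {w} ∆ {v}) = {w} ∆ {v} := by
  ext i
  by_cases h0 : i = x <;> by_cases h1 : i = y <;> by_cases h2 : i = z <;> by_cases h3 : i = w <;> by_cases h4 : i = v <;> simp_all [Finset.mem_symmDiff]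

lemma c5 {m : ℕ} (x y : Fin m) : (({x} : Finset (Fin m)) ∆ {y}) ∆ {x} = {y} := by
  ext i; simp only [Finset.mem_symmDiff]; tauto

lemma c6 {m : ℕ} (x y z w : Fin m) :
    ({x} : Finset (Fin m)) ∆ ({x} ∆ {y} ∆ {z} ∆ {w}) = {y} ∆ {z} ∆ {w} := by
  ext i
  by_cases h0 : i = x <;> by_cases h1 : i = y <;> by_cases h2 : i = z <;> by_cases h3 : i = w <;> simp_all [Finset.mem_symmDiff]

lemma c7 {m : ℕ} (x y z : Fin m) :
    ({x} : Finset (Fin m)) ∆ ({y} ∆ {z}) = {y} ∆ {z} ∆ {x} := by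
  ext i; simp only [Finset.mem_symmDiff]; tauto

lemma c8 {m : ℕ} (x y : Fin m) : (({x} : Finset (Fin m)) ∆ {y}) ∆ {y} = {x} := by
  ext i; simp only [Finset.mem_symmDiff]; tauto

lemma c9 {m : ℕ} (a b c : Fin m) :
    ({a} : Finset (Fin m)) ∆ {b} ∆ {c} ∆ {a} = {b} ∆ {c} := by
  ext i
  by_cases h0 : i = a <;> by_cases h1 : i = b <;> by_cases h2 : i = c <;> simp_all [Finset.mem_symmDiff]

lemma c10 {m : ℕ} (a b c : Fin m) :
    ({a} : Finset (Fin m)) ∆ {b} ∆ {c} ∆ {a} ∆ {b} = {c} := by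
  ext i
  by_cases h0 : i = a <;> by_cases h1 : i = b <;> by_cases h2 : i = c <;> simp_all [Finset.mem_symmDiff]

lemma rearr2 {m : ℕ} (a b c d p q : Fin m) :
    (({a} : Finset (Fin m)) ∆ {b} ∆ {c} ∆ {d}) ∆ ({p} ∆ {q})
      = {a} ∆ {b} ∆ {c} ∆ {d} ∆ {p} ∆ {q} := by
  ext i
  by_cases h0 : i = a <;> by_cases h1 : i = b <;> by_cases h2 : i = c <;> by_cases h3 : i = d <;> by_cases h4 : i = p <;> by_cases h5 : i = q <;> simp_all [Finset.mem_symmDiff]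

lemma rearr1 {m : ℕ} (a b c d p q : Fin m) :
    (({b} : Finset (Fin m)) ∆ {c} ∆ {d}) ∆ ({p} ∆ {q} ∆ {a})
      = {a} ∆ {b} ∆ {c} ∆ {d} ∆ {p} ∆ {q} := by
  ext i
  by_cases h0 : i = a <;> by_cases h1 : i = b <;> by_cases h2 : i = c <;> by_cases h3 : i = d <;> by_cases h4 : i = p <;> by_cases h5 : i = q <;> simp_all [Finset.mem_symmDiff]

lemma trip_ne {m : ℕ} {x y z : Fin m}
    (h : ((({x} : Finset (Fin m)) ∆ {y} ∆ {z})).card ≠ 1) :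
    x ≠ y ∧ x ≠ z ∧ y ≠ z := by
  refine ⟨?_, ?_, ?_⟩ <;> intro heq <;> apply h
  · subst heq
    have h1 : ({x} : Finset (Fin m)) ∆ {x} ∆ {z} = {z} := by
      ext i; simp only [Finset.mem_symmDiff]; tauto
    rw [h1]; simp
  · subst heq
    rw [c5]; simp
  · subst heq
    rw [c8]; simp

lemma sd_two {m : ℕ} {a b : Fin m} (hab : a ≠ b) :
    ({a} : Finset (Fin m)) ∆ {b} = {a, b} := by
  ext i
  by_cases h1 : i = a <;> by_cases h2 : i = b <;>
    simp_all [Finset.mem_symmDiff]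

lemma sd_three {m : ℕ} {a b c : Fin m} (hab : a ≠ b) (hac : a ≠ c) (hbc : b ≠ c) :
    ({a} : Finset (Fin m)) ∆ {b} ∆ {c} = {a, b, c} := by
  ext i
  by_cases h1 : i = a <;> by_cases h2 : i = b <;> by_cases h3 : i = c <;>
    simp_all [Finset.mem_symmDiff]

lemma pc1 {m : ℕ} {a b : Fin m} (hab : a ≠ b) :
    ({a, b} : Finset (Fin m)) ∆ {b} = {a} := by
  ext i
  by_cases h1 : i = a <;> by_cases h2 : i = b <;>
    simp_all [Finset.mem_symmDiff]

lemma pc2 {m : ℕ} {b c : Fin m} (hbc : b ≠ c) :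
    ({b} : Finset (Fin m)) ∆ {b, c} = {c} := by
  ext i
  by_cases h1 : i = b <;> by_cases h2 : i = c <;>
    simp_all [Finset.mem_symmDiff]

lemma pc3 {m : ℕ} {a b c : Fin m} (hab : a ≠ b) (hac : a ≠ c) (hbc : b ≠ c) :
    ({a, b} : Finset (Fin m)) ∆ {b, c} = {a, c} := by
  ext i
  by_cases h1 : i = a <;> by_cases h2 : i = b <;> by_cases h3 : i = c <;>
    simp_all [Finset.mem_symmDiff]

lemma pc4 {m : ℕ} {a c : Fin m} (hac : a ≠ c) :
    ({a} : Finset (Fin m)) ∆ {a, c} = {c} := by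
  ext i
  by_cases h1 : i = a <;> by_cases h2 : i = c <;>
    simp_all [Finset.mem_symmDiff]

lemma pc5 {m : ℕ} {a c : Fin m} (hac : a ≠ c) :
    ({a, c} : Finset (Fin m)) ∆ {c} = {a} := by
  ext i
  by_cases h1 : i = a <;> by_cases h2 : i = c <;>
    simp_all [Finset.mem_symmDiff]

lemma card_pair' {m : ℕ} {a c : Fin m} (hac : a ≠ c) :
    ({a, c} : Finset (Fin m)).card = 2 := by
  rw [Finset.card_insert_of_notMem (by simp [hac]), Finset.card_singleton]

lemma mem_Q_iff {m : ℕ} (v0 X B : Finset (Fin m)) :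
    (∃ W, W ⊆ X ∧ B = v0 ∆ W) ↔ v0 \ X ⊆ B ∧ B ⊆ v0 ∪ X := by
  constructor
  · rintro ⟨W, hW, rfl⟩
    have hW' : ∀ i, i ∈ W → i ∈ X := fun i h => hW h
    constructor <;> intro i hi
    · specialize hW' i
      simp only [Finset.mem_sdiff] at hi
      simp only [Finset.mem_symmDiff]
      tauto
    · specialize hW' i
      simp only [Finset.mem_symmDiff] at hi
      simp only [Finset.mem_union]
      tauto
  · rintro ⟨h1, h2⟩
    refine ⟨v0 ∆ B, ?_, (sd_cancel v0 B).symm⟩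
    intro i hi
    have h1' := @h1 i
    have h2' := @h2 i
    simp only [Finset.mem_sdiff] at h1'
    simp only [Finset.mem_union] at h2'
    rcases Finset.mem_symmDiff.mp hi with ⟨hv, hB⟩ | ⟨hB, hv⟩ <;> tauto

lemma sd_subset {m : ℕ} {W Z X : Finset (Fin m)} (h1 : W ⊆ X) (h2 : Z ⊆ X) :
    W ∆ Z ⊆ X := by
  intro i hi
  rcases Finset.mem_symmDiff.mp hi with ⟨h, _⟩ | ⟨h, _⟩
  exacts [h1 h, h2 h]

lemma key_inter {m : ℕ} (v0 X Z : Finset (Fin m)) (hZ : Z ⊆ X) :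
    (v0 ∆ (Z ∆ (v0 ∩ X))) ∩ X = Z := by
  ext i
  have hZi : i ∈ Z → i ∈ X := fun h => hZ h
  simp only [Finset.mem_inter, Finset.mem_symmDiff]
  tauto

lemma ne_of_mem_not_mem {m : ℕ} {s t : Finset (Fin m)} (x : Fin m)
    (hx : x ∈ s) (hx' : x ∉ t) : s ≠ t := fun h => hx' (h ▸ hx)

lemma sd_rcancel {m : ℕ} (A B : Finset (Fin m)) : (A ∆ B) ∆ B = A := by
  ext i; simp only [Finset.mem_symmDiff]; tauto

lemma c11 {m : ℕ} (a b c d p : Fin m) :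
    (({a} : Finset (Fin m)) ∆ {b}) ∆ ({a} ∆ {b} ∆ {c} ∆ {d} ∆ {p}) = {c} ∆ {d} ∆ {p} := by
  ext i
  by_cases h1 : i = a <;> by_cases h2 : i = b <;> by_cases h3 : i = c <;>
    by_cases h4 : i = d <;> by_cases h5 : i = p <;> simp_all [Finset.mem_symmDiff]

lemma rearr3 {m : ℕ} (a b c d p q : Fin m) :
    (({a} : Finset (Fin m)) ∆ {b} ∆ {c}) ∆ ({d} ∆ {p} ∆ {q})
      = {a} ∆ {b} ∆ {c} ∆ {d} ∆ {p} ∆ {q} := by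
  ext i
  by_cases h1 : i = a <;> by_cases h2 : i = b <;> by_cases h3 : i = c <;>
    by_cases h4 : i = d <;> by_cases h5 : i = p <;> by_cases h6 : i = q <;>
    simp_all [Finset.mem_symmDiff]

lemma rearr4 {m : ℕ} (a b c d p q : Fin m) :
    (({c} : Finset (Fin m)) ∆ {d} ∆ {p}) ∆ ({q} ∆ {a} ∆ {b})
      = {a} ∆ {b} ∆ {c} ∆ {d} ∆ {p} ∆ {q} := by
  ext i
  by_cases h1 : i = a <;> by_cases h2 : i = b <;> by_cases h3 : i = c <;>
    by_cases h4 : i = d <;> by_cases h5 : i = p <;> by_cases h6 : i = q <;>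
    simp_all [Finset.mem_symmDiff]

lemma assoc3' {m : ℕ} (A : Finset (Fin m)) (x y z : Fin m) :
    A ∆ {x} ∆ {y} ∆ {z} = A ∆ ({x} ∆ {y} ∆ {z}) := by
  ext i
  by_cases h0 : i ∈ A <;> by_cases h1 : i = x <;> by_cases h2 : i = y <;>
    by_cases h3 : i = z <;> simp_all [Finset.mem_symmDiff]

lemma assoc4' {m : ℕ} (A : Finset (Fin m)) (x y z w : Fin m) :
    A ∆ {x} ∆ {y} ∆ {z} ∆ {w} = A ∆ ({x} ∆ {y} ∆ {z} ∆ {w}) := by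
  ext i
  by_cases h0 : i ∈ A <;> by_cases h1 : i = x <;> by_cases h2 : i = y <;>
    by_cases h3 : i = z <;> by_cases h4 : i = w <;> simp_all [Finset.mem_symmDiff]

lemma assoc5' {m : ℕ} (A : Finset (Fin m)) (x y z w v : Fin m) :
    A ∆ {x} ∆ {y} ∆ {z} ∆ {w} ∆ {v} = A ∆ ({x} ∆ {y} ∆ {z} ∆ {w} ∆ {v}) := by
  ext i
  by_cases h0 : i ∈ A <;> by_cases h1 : i = x <;> by_cases h2 : i = y <;>
    by_cases h3 : i = z <;> by_cases h4 : i = w <;> by_cases h5 : i = v <;>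
    simp_all [Finset.mem_symmDiff]

/-- The convex hull of an isometric 6-cycle in a two-dimensional partial cube is
either the cycle itself or `Q_3⁻` (the 3-cube minus a vertex). -/
theorem stmt9 (m : ℕ) (V C : Set (Finset (Fin m))) (hV : IsPC V)
    (hvc : VCdimLE V 2) (hCV : C ⊆ V) (hC : IsPC C)
    (hcyc : Nonempty (((cubeGraph m).induce C) ≃g SimpleGraph.cycleGraph 6)) :
    convexHullIn V C = C ∨
      Nonempty (((cubeGraph m).induce (convexHullIn V C)) ≃g
        ((cubeGraph 3).induce {B : Finset (Fin 3) | B ≠ Finset.univ})) := by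
  obtain ⟨φ⟩ := hcyc
  obtain ⟨u, hu⟩ : ∃ u : Fin 6 → Finset (Fin m),
      ∀ i, u i = ((φ.symm i : C) : Finset (Fin m)) := ⟨_, fun _ => rfl⟩
  have huC : ∀ i, u i ∈ C := fun i => by rw [hu]; exact (φ.symm i).2
  have hCrange : ∀ x, x ∈ C → ∃ i, u i = x := by
    intro x hx
    refine ⟨φ ⟨x, hx⟩, ?_⟩
    rw [hu]
    exact congrArg Subtype.val (φ.symm_apply_apply ⟨x, hx⟩)
  have hadj : ∀ i j : Fin 6,
      ((u i) ∆ (u j)).card = 1 ↔ (SimpleGraph.cycleGraph 6).Adj i j := by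
    intro i j
    rw [hu, hu]
    have key : ((cubeGraph m).induce C).Adj (φ.symm i) (φ.symm j)
        ↔ (SimpleGraph.cycleGraph 6).Adj i j := φ.symm.map_adj_iff
    exact key
  -- extract edge labels
  obtain ⟨a, ha⟩ := Finset.card_eq_one.mp ((hadj 0 1).mpr (by decide))
  obtain ⟨b, hb⟩ := Finset.card_eq_one.mp ((hadj 1 2).mpr (by decide))
  obtain ⟨c, hc⟩ := Finset.card_eq_one.mp ((hadj 2 3).mpr (by decide))
  obtain ⟨d, hd⟩ := Finset.card_eq_one.mp ((hadj 3 4).mpr (by decide))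
  obtain ⟨p, hp⟩ := Finset.card_eq_one.mp ((hadj 4 5).mpr (by decide))
  obtain ⟨q, hq⟩ := Finset.card_eq_one.mp ((hadj 5 0).mpr (by decide))
  have hu1 : u 1 = u 0 ∆ {a} := by
    have h := (sd_cancel (u 0) (u 1)).symm; rw [ha] at h; exact h
  have hu2 : u 2 = u 0 ∆ {a} ∆ {b} := by
    have h := (sd_cancel (u 1) (u 2)).symm; rw [hb, hu1] at h; exact h
  have hu3 : u 3 = u 0 ∆ {a} ∆ {b} ∆ {c} := by
    have h := (sd_cancel (u 2) (u 3)).symm; rw [hc, hu2] at h; exact h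
  have hu4 : u 4 = u 0 ∆ {a} ∆ {b} ∆ {c} ∆ {d} := by
    have h := (sd_cancel (u 3) (u 4)).symm; rw [hd, hu3] at h; exact h
  have hu5 : u 5 = u 0 ∆ {a} ∆ {b} ∆ {c} ∆ {d} ∆ {p} := by
    have h := (sd_cancel (u 4) (u 5)).symm; rw [hp, hu4] at h; exact h
  have hW5q : ({a} : Finset (Fin m)) ∆ {b} ∆ {c} ∆ {d} ∆ {p} = {q} := by
    have h : u 5 ∆ u 0 = {a} ∆ {b} ∆ {c} ∆ {d} ∆ {p} := by
      conv_lhs => rw [hu5]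
      rw [assoc5', sd_left_cancel]
    rw [← h, hq]
  have hTot : ({a} : Finset (Fin m)) ∆ {b} ∆ {c} ∆ {d} ∆ {p} ∆ {q} = ∅ := by
    rw [hW5q, symmDiff_self, Finset.bot_eq_empty]
  -- non-adjacency facts
  have hna03 : ¬ ((u 0) ∆ (u 3)).card = 1 :=
    fun h => (by decide : ¬ (SimpleGraph.cycleGraph 6).Adj 0 3) ((hadj 0 3).mp h)
  have hna14 : ¬ ((u 1) ∆ (u 4)).card = 1 :=
    fun h => (by decide : ¬ (SimpleGraph.cycleGraph 6).Adj 1 4) ((hadj 1 4).mp h)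
  have hna25 : ¬ ((u 2) ∆ (u 5)).card = 1 :=
    fun h => (by decide : ¬ (SimpleGraph.cycleGraph 6).Adj 2 5) ((hadj 2 5).mp h)
  have e03 : u 0 ∆ u 3 = {a} ∆ {b} ∆ {c} := by
    conv_lhs => rw [hu3]
    rw [assoc3', sd_cancel]
  have e14 : u 1 ∆ u 4 = {b} ∆ {c} ∆ {d} := by
    conv_lhs => rw [hu1, hu4]
    rw [assoc4', sd_sd, c6]
  have e25 : u 2 ∆ u 5 = {c} ∆ {d} ∆ {p} := by
    conv_lhs => rw [hu2, hu5]
    rw [assoc5', symmDiff_assoc (u 0) {a} {b}, sd_sd, c11]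
  obtain ⟨hab, hac, hbc⟩ := trip_ne (e03 ▸ hna03)
  obtain ⟨hbc', hbd, hcd⟩ := trip_ne (e14 ▸ hna14)
  obtain ⟨hcd', hcp, hdp2⟩ := trip_ne (e25 ▸ hna25)
  have hdpq : ({a} : Finset (Fin m)) ∆ {b} ∆ {c} = {d} ∆ {p} ∆ {q} :=
    sd_eq_empty_iff.mp (by rw [rearr3]; exact hTot)
  obtain ⟨hdp, hdq, hpq⟩ := trip_ne (fun h => hna03 (by rw [e03, hdpq]; exact h))
  have hbcd_pqa : ({b} : Finset (Fin m)) ∆ {c} ∆ {d} = {p} ∆ {q} ∆ {a} :=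
    sd_eq_empty_iff.mp (by rw [rearr1]; exact hTot)
  obtain ⟨hpq', hpa, hqa⟩ := trip_ne (fun h => hna14 (by rw [e14, hbcd_pqa]; exact h))
  have hcdp_qab : ({c} : Finset (Fin m)) ∆ {d} ∆ {p} = {q} ∆ {a} ∆ {b} :=
    sd_eq_empty_iff.mp (by rw [rearr4]; exact hTot)
  obtain ⟨hqa', hqb, hab'⟩ := trip_ne (fun h => hna25 (by rw [e25, hcdp_qab]; exact h))
  -- identify d = a, p = b, q = c
  have hW4 : ({a} : Finset (Fin m)) ∆ {b} ∆ {c} ∆ {d} = {q} ∆ {p} := by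
    have h := sd_rcancel (({a} : Finset (Fin m)) ∆ {b} ∆ {c} ∆ {d}) {p}
    rw [hW5q] at h
    exact h.symm
  have hset1 : ({b, c, d} : Finset (Fin m)) = {p, q, a} := by
    rw [← sd_three hbc hbd hcd, ← sd_three hpq hpa hqa]
    exact hbcd_pqa
  have hdmem : d ∈ ({p, q, a} : Finset (Fin m)) := by rw [← hset1]; simp
  simp only [Finset.mem_insert, Finset.mem_singleton] at hdmem
  rcases hdmem with h' | h' | h'
  · exact absurd h' hdp
  · exact absurd h' hdq
  have h'' := h'.symm
  subst h''
  rw [c9] at hW4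
  have hset2 : ({b, c} : Finset (Fin m)) = {q, p} := by
    rw [← sd_two hbc, ← sd_two (fun h => hpq h.symm)]
    exact hW4
  have hpmem : p ∈ ({b, c} : Finset (Fin m)) := by rw [hset2]; simp
  simp only [Finset.mem_insert, Finset.mem_singleton] at hpmem
  rcases hpmem with h' | h'
  swap
  · exact absurd h'.symm hcp
  have h'' := h'.symm
  subst h''
  have hqmem : q ∈ ({b, c} : Finset (Fin m)) := by rw [hset2]; simp
  simp only [Finset.mem_insert, Finset.mem_singleton] at hqmem
  rcases hqmem with h' | h'
  · exact absurd h' hqb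
  have h'' := h'.symm
  subst h''
  -- canonical forms of the six cycle vertices
  have hv2 : u 2 = u 0 ∆ {a, b} := by rw [hu2, symmDiff_assoc, sd_two hab]
  have hv3 : u 3 = u 0 ∆ {a, b, c} := by rw [hu3, assoc3', sd_three hab hac hbc]
  have hv4 : u 4 = u 0 ∆ {b, c} := by rw [hu4, assoc4', c9, sd_two hbc]
  have hv5 : u 5 = u 0 ∆ {c} := by rw [hu5, assoc5', c10]
  clear hC hV ha hb hc hd hp hq hu2 hu3 hu4 hu5 hW5q hTot hna03 hna14 hna25
  clear e03 e14 e25 hdpq hbcd_pqa hcdp_qab hW4 hset1 hset2 hadj hu φ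
  have hmem : ∀ B : Finset (Fin m), B ∈ C ↔
      (B = u 0 ∆ ∅ ∨ B = u 0 ∆ {a} ∨ B = u 0 ∆ {a, b} ∨ B = u 0 ∆ {a, b, c} ∨
        B = u 0 ∆ {b, c} ∨ B = u 0 ∆ {c}) := by
    intro B
    constructor
    · intro hB
      obtain ⟨i, rfl⟩ := hCrange B hB
      fin_cases i
      · exact Or.inl (symmDiff_empty' (u 0)).symm
      · exact Or.inr (Or.inl hu1)
      · exact Or.inr (Or.inr (Or.inl hv2))
      · exact Or.inr (Or.inr (Or.inr (Or.inl hv3)))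
      · exact Or.inr (Or.inr (Or.inr (Or.inr (Or.inl hv4))))
      · exact Or.inr (Or.inr (Or.inr (Or.inr (Or.inr hv5))))
    · rintro (rfl | rfl | rfl | rfl | rfl | rfl)
      · rw [symmDiff_empty']; exact huC 0
      · rw [← hu1]; exact huC 1
      · rw [← hv2]; exact huC 2
      · rw [← hv3]; exact huC 3
      · rw [← hv4]; exact huC 4
      · rw [← hv5]; exact huC 5
  have hallQV : ∀ W : Finset (Fin m), W ⊆ {a, b, c} → W ≠ {b} → W ≠ {a, c} →
      u 0 ∆ W ∈ C := by
    intro W hW hn1 hn2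
    rcases subset_triple hW with rfl | rfl | rfl | rfl | rfl | rfl | rfl | rfl
    · exact (hmem _).mpr (Or.inl rfl)
    · exact (hmem _).mpr (Or.inr (Or.inl rfl))
    · exact absurd rfl hn1
    · exact (hmem _).mpr (Or.inr (Or.inr (Or.inr (Or.inr (Or.inr rfl)))))
    · exact (hmem _).mpr (Or.inr (Or.inr (Or.inl rfl)))
    · exact absurd rfl hn2
    · exact (hmem _).mpr (Or.inr (Or.inr (Or.inr (Or.inr (Or.inl rfl)))))
    · exact (hmem _).mpr (Or.inr (Or.inr (Or.inr (Or.inl rfl))))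
  -- at most one center can belong to V
  have hcenter : ¬ (u 0 ∆ {b} ∈ V ∧ u 0 ∆ {a, c} ∈ V) := by
    rintro ⟨h1, h2⟩
    have hsh : Shatters V {a, b, c} := by
      intro Z hZ
      refine ⟨u 0 ∆ (Z ∆ (u 0 ∩ {a, b, c})), ?_, key_inter (u 0) {a, b, c} Z hZ⟩
      have hWX : Z ∆ (u 0 ∩ {a, b, c}) ⊆ {a, b, c} :=
        sd_subset hZ Finset.inter_subset_right
      by_cases hn1 : Z ∆ (u 0 ∩ {a, b, c}) = {b}
      · rw [hn1]; exact h1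
      by_cases hn2 : Z ∆ (u 0 ∩ {a, b, c}) = {a, c}
      · rw [hn2]; exact h2
      exact hCV (hallQV _ hWX hn1 hn2)
    have h3 := hvc {a, b, c} hsh
    have h4 : ({a, b, c} : Finset (Fin m)).card = 3 := by
      rw [Finset.card_insert_of_notMem (by simp [hab, hac]), card_pair' hbc]
    omega
  -- the convex subcube
  have hT1conv : IsConvexIn V
      {B | (∃ W, W ⊆ ({a, b, c} : Finset (Fin m)) ∧ B = u 0 ∆ W) ∧ B ∈ V} := by
    constructor
    · exact fun B hB => hB.2
    · rintro P ⟨hPQ, hPV⟩ R ⟨hRQ, hRV⟩ x hx hbet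
      obtain ⟨hp1, hp2⟩ := (mem_Q_iff _ _ _).mp hPQ
      obtain ⟨hr1, hr2⟩ := (mem_Q_iff _ _ _).mp hRQ
      obtain ⟨hb1, hb2⟩ := (between_iff P x R).mp hbet
      refine ⟨(mem_Q_iff _ _ _).mpr ⟨?_, ?_⟩, hx⟩
      · exact subset_trans (Finset.subset_inter hp1 hr1) hb1
      · exact subset_trans hb2 (Finset.union_subset hp2 hr2)
  have hCT1 : C ⊆ {B | (∃ W, W ⊆ ({a, b, c} : Finset (Fin m)) ∧ B = u 0 ∆ W) ∧ B ∈ V} := by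
    intro B hB
    refine ⟨?_, hCV hB⟩
    rcases (hmem B).mp hB with rfl | rfl | rfl | rfl | rfl | rfl
    · exact ⟨∅, Finset.empty_subset _, rfl⟩
    · exact ⟨{a}, by intro i hi; simp only [Finset.mem_singleton] at hi; simp [hi], rfl⟩
    · exact ⟨{a, b}, by intro i hi; simp only [Finset.mem_insert, Finset.mem_singleton] at hi ⊢; tauto, rfl⟩
    · exact ⟨{a, b, c}, subset_rfl, rfl⟩
    · exact ⟨{b, c}, by intro i hi; simp only [Finset.mem_insert, Finset.mem_singleton] at hi ⊢; tauto, rfl⟩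
    · exact ⟨{c}, by intro i hi; simp only [Finset.mem_singleton] at hi; simp [hi], rfl⟩
  have hhull_sub : convexHullIn V C ⊆
      {B | (∃ W, W ⊆ ({a, b, c} : Finset (Fin m)) ∧ B = u 0 ∆ W) ∧ B ∈ V} :=
    fun x hx => hx _ ⟨hCT1, hT1conv⟩
  have hChull : C ⊆ convexHullIn V C := fun x hx =>
    Set.mem_sInter.mpr fun T hT => hT.1 hx
  -- forcing centers into the hull
  have hforce1 : u 0 ∆ {b} ∈ V → u 0 ∆ {b} ∈ convexHullIn V C := by
    intro h1
    refine Set.mem_sInter.mpr fun T hT => ?_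
    obtain ⟨hCT, _, hTconv⟩ := hT
    refine hTconv (u 0 ∆ {a, b}) (hCT ((hmem _).mpr (Or.inr (Or.inr (Or.inl rfl)))))
      (u 0 ∆ {b, c}) (hCT ((hmem _).mpr (Or.inr (Or.inr (Or.inr (Or.inr (Or.inl rfl)))))))
      (u 0 ∆ {b}) h1 ?_
    show hdist (u 0 ∆ {a, b}) (u 0 ∆ {b}) + hdist (u 0 ∆ {b}) (u 0 ∆ {b, c})
        = hdist (u 0 ∆ {a, b}) (u 0 ∆ {b, c})
    rw [hdist_sd, hdist_sd, hdist_sd, pc1 hab, pc2 hbc, pc3 hab hac hbc,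
      Finset.card_singleton, Finset.card_singleton, card_pair' hac]
  have hforce2 : u 0 ∆ {a, c} ∈ V → u 0 ∆ {a, c} ∈ convexHullIn V C := by
    intro h2
    refine Set.mem_sInter.mpr fun T hT => ?_
    obtain ⟨hCT, _, hTconv⟩ := hT
    refine hTconv (u 0 ∆ {a}) (hCT ((hmem _).mpr (Or.inr (Or.inl rfl))))
      (u 0 ∆ {c}) (hCT ((hmem _).mpr (Or.inr (Or.inr (Or.inr (Or.inr (Or.inr rfl)))))))
      (u 0 ∆ {a, c}) h2 ?_
    show hdist (u 0 ∆ {a}) (u 0 ∆ {a, c}) + hdist (u 0 ∆ {a, c}) (u 0 ∆ {c})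
        = hdist (u 0 ∆ {a}) (u 0 ∆ {c})
    rw [hdist_sd, hdist_sd, hdist_sd, pc4 hac, pc5 hac, sd_two hac,
      Finset.card_singleton, Finset.card_singleton, card_pair' hac]
  -- final case analysis
  by_cases h1V : u 0 ∆ {b} ∈ V
  · by_cases h2V : u 0 ∆ {a, c} ∈ V
    · exact absurd ⟨h1V, h2V⟩ hcenter
    right
    have hSet : convexHullIn V C
        = {B | ∃ W, W ⊆ ({a, b, c} : Finset (Fin m)) ∧ W ≠ {a, c} ∧ B = u 0 ∆ W} := by
      apply Set.Subset.antisymm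
      · intro x hx
        obtain ⟨⟨W, hWX, rfl⟩, hxV⟩ := hhull_sub hx
        refine ⟨W, hWX, ?_, rfl⟩
        rintro rfl
        exact h2V hxV
      · rintro B ⟨W, hWX, hWne, rfl⟩
        by_cases hWb : W = {b}
        · subst hWb; exact hforce1 h1V
        · exact hChull (hallQV W hWX hWb hWne)
    exact iso_lemma hab hac hbc (u 0) {a, c}
      (by intro i hi; simp only [Finset.mem_insert, Finset.mem_singleton] at hi ⊢; tauto)
      _ hSet
  by_cases h2V : u 0 ∆ {a, c} ∈ V
  · right
    have hSet : convexHullIn V C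
        = {B | ∃ W, W ⊆ ({a, b, c} : Finset (Fin m)) ∧ W ≠ {b} ∧ B = u 0 ∆ W} := by
      apply Set.Subset.antisymm
      · intro x hx
        obtain ⟨⟨W, hWX, rfl⟩, hxV⟩ := hhull_sub hx
        refine ⟨W, hWX, ?_, rfl⟩
        rintro rfl
        exact h1V hxV
      · rintro B ⟨W, hWX, hWne, rfl⟩
        by_cases hWac : W = {a, c}
        · subst hWac; exact hforce2 h2V
        · exact hChull (hallQV W hWX hWne hWac)
    exact iso_lemma hab hac hbc (u 0) {b}
      (by intro i hi; simp only [Finset.mem_singleton] at hi; simp [hi])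
      _ hSet
  · left
    apply Set.Subset.antisymm _ hChull
    intro x hx
    obtain ⟨⟨W, hWX, rfl⟩, hxV⟩ := hhull_sub hx
    have hWb : W ≠ {b} := by rintro rfl; exact h1V hxV
    have hWac : W ≠ {a, c} := by rintro rfl; exact h2V hxV
    exact hallQV W hWX hWb hWac
end

section
/- Let G ∈ F(Q_3) be a two-dimensional partial cube and let H = SK_n with n ≥ 4 be an isometric subgraph of G, standardly embedded. Then either the vertex ∅ belongs to G (so H extends to SK*_n in G), or H is a convex subgraph of G. -/
open Finset

/-- A standardly embedded isometric `SK_n` (`n ≥ 4`) in a two-dimensional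
partial cube either extends by the vertex `∅` (to `SK*_n`) or is convex. -/
theorem stmt10 (m n : ℕ) (hn : 4 ≤ n) (V : Set (Finset (Fin m)))
    (iota : Fin n → Fin m) (hiota : Function.Injective iota)
    (hV : IsPC V) (hvc : VCdimLE V 2)
    (hsub : skCopy n iota ⊆ V) (hW : IsPC (skCopy n iota)) :
    (∅ : Finset (Fin m)) ∈ V ∨ IsConvexIn V (skCopy n iota) := by
  classical
  by_cases h0 : (∅ : Finset (Fin m)) ∈ V
  · exact Or.inl h0
  right
  refine ⟨hsub, ?_⟩
  rintro u ⟨u', hu', rfl⟩ v ⟨v', hv', rfl⟩ x hxV heq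
  simp only [hdist] at heq
  set a := Finset.image iota u' with ha
  set b := Finset.image iota v' with hb
  -- the two halves of the symmetric-difference triangle are disjoint
  have htri : symmDiff a b ⊆ symmDiff a x ∪ symmDiff x b := symmDiff_triangle a x b
  have h1 : (symmDiff a b).card ≤ (symmDiff a x ∪ symmDiff x b).card :=
    Finset.card_le_card htri
  have h2 : (symmDiff a x ∪ symmDiff x b).card ≤ (symmDiff a x).card + (symmDiff x b).card :=
    Finset.card_union_le _ _
  have hie := Finset.card_union_add_card_inter (symmDiff a x) (symmDiff x b)
  have hint : ((symmDiff a x) ∩ (symmDiff x b)).card = 0 := by omega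
  have hdisj : (symmDiff a x) ∩ (symmDiff x b) = ∅ := Finset.card_eq_zero.mp hint
  -- x ⊆ a ∪ b
  have hsubuv : x ⊆ a ∪ b := by
    intro t ht
    by_contra htn
    simp only [Finset.mem_union, not_or] at htn
    have hta : t ∈ symmDiff a x := by
      rw [Finset.mem_symmDiff]; exact Or.inr ⟨ht, htn.1⟩
    have htb : t ∈ symmDiff x b := by
      rw [Finset.mem_symmDiff]; exact Or.inl ⟨ht, htn.2⟩
    have : t ∈ (symmDiff a x) ∩ (symmDiff x b) := Finset.mem_inter.mpr ⟨hta, htb⟩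
    rw [hdisj] at this
    exact absurd this (Finset.notMem_empty t)
  have hsubim : x ⊆ Finset.image iota (u' ∪ v') := by
    rw [Finset.image_union]; exact hsubuv
  obtain ⟨x', hx'sub, hx'eq⟩ := Finset.subset_image_iff.mp hsubim
  subst hx'eq
  -- x' has at most 2 elements, otherwise we could shatter a 3-element set
  have hcard2 : x'.card ≤ 2 := by
    by_contra h3
    push_neg at h3
    obtain ⟨Y', hY'sub, hY'3⟩ := Finset.exists_subset_card_eq (show 3 ≤ x'.card by omega)
    have hYcard : (Finset.image iota Y').card = 3 := by
      rw [Finset.card_image_of_injective _ hiota, hY'3]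
    have hsh : Shatters V (Finset.image iota Y') := by
      intro Z hZ
      obtain ⟨Z', hZ'sub, rfl⟩ := Finset.subset_image_iff.mp hZ
      by_cases hZ0 : Z' = ∅
      · subst hZ0
        obtain ⟨l, hl⟩ : ∃ l, l ∉ Y' := by
          by_contra hc
          push_neg at hc
          have huniv : Y' = Finset.univ := Finset.eq_univ_iff_forall.mpr hc
          rw [huniv, Finset.card_univ, Fintype.card_fin] at hY'3
          omega
        refine ⟨{iota l}, hsub ⟨{l}, Or.inl (Finset.card_singleton l), by simp⟩, ?_⟩
        simp only [Finset.image_empty]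
        rw [Finset.singleton_inter_of_notMem]
        intro hmem
        obtain ⟨y, hy, hyl⟩ := Finset.mem_image.mp hmem
        exact hl (hiota hyl ▸ hy)
      by_cases hZY : Z' = Y'
      · subst hZY
        refine ⟨Finset.image iota x', hxV, ?_⟩
        exact Finset.inter_eq_right.mpr (Finset.image_subset_image hY'sub)
      · have hcle : Z'.card ≤ 3 := hY'3 ▸ Finset.card_le_card hZ'sub
        have hne3 : Z'.card ≠ 3 := fun h =>
          hZY (Finset.eq_of_subset_of_card_le hZ'sub (by omega))
        have hne0 : Z'.card ≠ 0 := fun h => hZ0 (Finset.card_eq_zero.mp h)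
        refine ⟨Finset.image iota Z', hsub ⟨Z', ?_, rfl⟩, ?_⟩
        · show Z'.card = 1 ∨ Z'.card = 2
          omega
        · exact Finset.inter_eq_left.mpr (Finset.image_subset_image hZ'sub)
    have := hvc _ hsh
    omega
  have hne : x' ≠ ∅ := by
    rintro rfl
    rw [Finset.image_empty] at hxV
    exact h0 hxV
  have hpos : 0 < x'.card := Finset.card_pos.mpr (Finset.nonempty_iff_ne_empty.mpr hne)
  exact ⟨x', show x'.card = 1 ∨ x'.card = 2 by omega, rfl⟩
end
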